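/- If C^x ∈ ℝ^{n×n} and C^y ∈ ℝ^{m×m} are symmetric positive semidefinite, then for all T, T₀ ∈ ℝ^{n×m} one has the global majorization F(T) ≤ F(T₀) + ⟨2 C^x T₀ C^y, T − T₀⟩ + ‖C^x‖₂ ‖C^y‖₂ ‖T − T₀‖_F². -/

import Mathlib

open scoped BigOperators
open Matrix

noncomputable section

/-- Frobenius inner product of two real `n × m` matrices. -/
def finner {n m : ℕ} (A B : Matrix (Fin n) (Fin m) ℝ) : ℝ :=
  ∑ i, ∑ j, A i j * B i j

/-- Frobenius norm. -/
def frobNorm {n m : ℕ} (A : Matrix (Fin n) (Fin m) ℝ) : ℝ :=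
  Real.sqrt (finner A A)

/-- Operator (spectral) norm of a real matrix, as a linear map between
Euclidean spaces. -/
def l2OpNorm {k l : ℕ} (M : Matrix (Fin k) (Fin l) ℝ) : ℝ :=
  ‖(Matrix.toEuclideanLin M).toContinuousLinearMap‖

lemma finner_add_left {n m : ℕ} (A B C : Matrix (Fin n) (Fin m) ℝ) :
    finner (A + B) C = finner A C + finner B C := by
  simp [finner, add_mul, Finset.sum_add_distrib]

lemma finner_add_right {n m : ℕ} (A B C : Matrix (Fin n) (Fin m) ℝ) :
    finner A (B + C) = finner A B + finner A C := by
  simp [finner, mul_add, Finset.sum_add_distrib]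

lemma finner_sub_left {n m : ℕ} (A B C : Matrix (Fin n) (Fin m) ℝ) :
    finner (A - B) C = finner A C - finner B C := by
  simp [finner, sub_mul, Finset.sum_sub_distrib]

lemma finner_smul_left {n m : ℕ} (r : ℝ) (A B : Matrix (Fin n) (Fin m) ℝ) :
    finner (r • A) B = r * finner A B := by
  simp [finner, Matrix.smul_apply, smul_eq_mul, mul_assoc, Finset.mul_sum]

lemma finner_comm {n m : ℕ} (A B : Matrix (Fin n) (Fin m) ℝ) :
    finner A B = finner B A := by
  simp [finner, mul_comm]

lemma finner_self_nonneg {n m : ℕ} (A : Matrix (Fin n) (Fin m) ℝ) : 0 ≤ finner A A := by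
  apply Finset.sum_nonneg; intro i _
  exact Finset.sum_nonneg fun j _ => mul_self_nonneg _

lemma finner_eq_trace {n m : ℕ} (A B : Matrix (Fin n) (Fin m) ℝ) :
    finner A B = (Aᴴ * B).trace := by
  simp only [Matrix.trace, Matrix.diag, Matrix.mul_apply, Matrix.conjTranspose_apply,
    star_trivial]
  rw [finner, Finset.sum_comm]

lemma psd_trace_nonneg {k : ℕ} {A : Matrix (Fin k) (Fin k) ℝ} (hA : A.PosSemidef) :
    0 ≤ A.trace := by
  apply Finset.sum_nonneg; intro i _
  have := hA.dotProduct_mulVec_nonneg (Pi.single i 1)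
  simpa [Matrix.mulVec_single, dotProduct, Pi.single_apply, ite_mul] using this

open scoped MatrixOrder Matrix.Norms.L2Operator in
lemma trace_mul_psd_nonneg {k : ℕ} {A B : Matrix (Fin k) (Fin k) ℝ}
    (hA : A.PosSemidef) (hB : B.PosSemidef) : 0 ≤ (A * B).trace := by
  have hS : CFC.sqrt A * CFC.sqrt A = A := CFC.sqrt_mul_sqrt_self A hA.nonneg
  have h1 : (CFC.sqrt A * CFC.sqrt A * B).trace = (A * B).trace := by rw [hS]
  rw [← h1, ← Matrix.trace_mul_cycle (CFC.sqrt A) B (CFC.sqrt A)]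
  have hherm : (CFC.sqrt A).conjTranspose = CFC.sqrt A := (CFC.sqrt_nonneg A).posSemidef.isHermitian.eq
  have : ((CFC.sqrt A)ᴴ * B * CFC.sqrt A).PosSemidef := hB.conjTranspose_mul_mul_same _
  rw [hherm] at this
  exact psd_trace_nonneg this

lemma dotProduct_mulVec_le {k : ℕ} (M : Matrix (Fin k) (Fin k) ℝ) (v : Fin k → ℝ) :
    v ⬝ᵥ (M *ᵥ v) ≤ l2OpNorm M * (v ⬝ᵥ v) := by
  set w : EuclideanSpace ℝ (Fin k) := (WithLp.equiv 2 (Fin k → ℝ)).symm v with hw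
  have happ : (Matrix.toEuclideanLin M) w = (WithLp.equiv 2 (Fin k → ℝ)).symm (M *ᵥ v) := by
    rw [Matrix.toEuclideanLin_apply]; simp [hw]
  have hinner : v ⬝ᵥ (M *ᵥ v) = inner ℝ w ((Matrix.toEuclideanLin M) w) := by
    rw [happ]; simp [PiLp.inner_apply, dotProduct, hw, mul_comm]
  have hself : v ⬝ᵥ v = ‖w‖ ^ 2 := by
    have : (inner ℝ w w : ℝ) = ‖w‖ ^ 2 := real_inner_self_eq_norm_sq w
    rw [← this, real_inner_self_eq_norm_sq, EuclideanSpace.norm_sq_eq]; simp [dotProduct, hw, pow_two]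
  rw [hinner, hself]
  calc (inner ℝ w ((Matrix.toEuclideanLin M) w) : ℝ)
      ≤ ‖w‖ * ‖(Matrix.toEuclideanLin M) w‖ := real_inner_le_norm _ _
    _ ≤ ‖w‖ * (l2OpNorm M * ‖w‖) := by
        apply mul_le_mul_of_nonneg_left _ (norm_nonneg _)
        exact ContinuousLinearMap.le_opNorm (Matrix.toEuclideanLin M).toContinuousLinearMap w
    _ = l2OpNorm M * ‖w‖ ^ 2 := by ring

lemma psd_opNorm_smul_sub {k : ℕ} {M : Matrix (Fin k) (Fin k) ℝ} (hM : M.IsHermitian) :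
    (l2OpNorm M • (1 : Matrix (Fin k) (Fin k) ℝ) - M).PosSemidef := by
  refine Matrix.PosSemidef.of_dotProduct_mulVec_nonneg ?_ ?_
  · unfold Matrix.IsHermitian at *
    rw [Matrix.conjTranspose_sub, hM]
    congr 1
    rw [Matrix.conjTranspose_smul]
    simp
  · intro v
    have := dotProduct_mulVec_le M v
    simp only [Matrix.sub_mulVec, dotProduct_sub, Matrix.smul_mulVec, Matrix.one_mulVec,
      dotProduct_smul, star_trivial, smul_eq_mul]
    linarith

lemma key_nonneg {n m : ℕ} {P : Matrix (Fin n) (Fin n) ℝ} {Q : Matrix (Fin m) (Fin m) ℝ}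
    (hP : P.PosSemidef) (hQ : Q.PosSemidef) (D : Matrix (Fin n) (Fin m) ℝ) :
    0 ≤ finner (P * D * Q) D := by
  rw [finner_eq_trace]
  have h1 : (P * D * Q)ᴴ * D = Q * (Dᴴ * P * D) := by
    rw [Matrix.conjTranspose_mul, Matrix.conjTranspose_mul, hP.isHermitian.eq, hQ.isHermitian.eq]
    simp only [Matrix.mul_assoc]
  rw [h1, Matrix.trace_mul_comm]
  exact trace_mul_psd_nonneg (hP.conjTranspose_mul_mul_same D) hQ

lemma psd_smul_one {k : ℕ} {a : ℝ} (ha : 0 ≤ a) :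
    (a • (1 : Matrix (Fin k) (Fin k) ℝ)).PosSemidef := by
  refine Matrix.PosSemidef.of_dotProduct_mulVec_nonneg ?_ ?_
  · show (a • (1 : Matrix (Fin k) (Fin k) ℝ))ᴴ = _
    rw [Matrix.conjTranspose_smul]; simp
  · intro v
    simp only [Matrix.smul_mulVec, Matrix.one_mulVec, dotProduct_smul, star_trivial,
      smul_eq_mul]
    have : (0:ℝ) ≤ v ⬝ᵥ v := Finset.sum_nonneg fun i _ => mul_self_nonneg _
    exact mul_nonneg ha this

example : True := trivial

lemma G_symm {n m : ℕ} {Cx : Matrix (Fin n) (Fin n) ℝ} {Cy : Matrix (Fin m) (Fin m) ℝ}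
    (hCx : Cx.IsHermitian) (hCy : Cy.IsHermitian) (A B : Matrix (Fin n) (Fin m) ℝ) :
    finner (Cx * A * Cy) B = finner (Cx * B * Cy) A := by
  rw [finner_eq_trace, finner_eq_trace]
  have h1 : (Cx * A * Cy)ᴴ * B = Cy * (Aᴴ * (Cx * B)) := by
    rw [Matrix.conjTranspose_mul, Matrix.conjTranspose_mul, hCx.eq, hCy.eq]
    simp only [Matrix.mul_assoc]
  have h2 : (Cx * B * Cy)ᴴ * A = Cy * (Bᴴ * (Cx * A)) := by
    rw [Matrix.conjTranspose_mul, Matrix.conjTranspose_mul, hCx.eq, hCy.eq]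
    simp only [Matrix.mul_assoc]
  rw [h1, h2]
  have h3 : (Cy * (Aᴴ * (Cx * B)))ᴴ = (Bᴴ * (Cx * A)) * Cy := by
    simp only [Matrix.conjTranspose_mul, Matrix.conjTranspose_conjTranspose, hCx.eq, hCy.eq,
      Matrix.mul_assoc]
  calc (Cy * (Aᴴ * (Cx * B))).trace
      = ((Cy * (Aᴴ * (Cx * B)))ᴴ).trace := by
        rw [Matrix.trace_conjTranspose]; simp
    _ = ((Bᴴ * (Cx * A)) * Cy).trace := by rw [h3]
    _ = (Cy * (Bᴴ * (Cx * A))).trace := Matrix.trace_mul_comm _ _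

/-- global quadratic majorization of the fused GW quadratic form for
symmetric PSD `Cˣ, Cʸ`. -/
theorem stmt3 {n m : ℕ} (Cx : Matrix (Fin n) (Fin n) ℝ) (Cy : Matrix (Fin m) (Fin m) ℝ)
    (hCx : Cx.PosSemidef) (hCy : Cy.PosSemidef)
    (F : Matrix (Fin n) (Fin m) ℝ → ℝ) (hF : ∀ T, F T = finner (Cx * T * Cy) T)
    (T T₀ : Matrix (Fin n) (Fin m) ℝ) :
    F T ≤ F T₀ + finner (2 • (Cx * T₀ * Cy)) (T - T₀)
        + l2OpNorm Cx * l2OpNorm Cy * frobNorm (T - T₀) ^ 2 := by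
  set D := T - T₀ with hD
  set a := l2OpNorm Cx with haa
  set b := l2OpNorm Cy with hbb
  have hTeq : T = T₀ + D := by rw [hD]; abel
  -- expansion
  have hexp : F T = F T₀ + 2 * finner (Cx * T₀ * Cy) D + finner (Cx * D * Cy) D := by
    rw [hF, hF, hTeq]
    have hmul : Cx * (T₀ + D) * Cy = Cx * T₀ * Cy + Cx * D * Cy := by
      rw [Matrix.mul_add, Matrix.add_mul]
    rw [hmul, finner_add_left, finner_add_right, finner_add_right,
      G_symm hCx.isHermitian hCy.isHermitian D T₀]
    ring
  have hsmul2 : finner (2 • (Cx * T₀ * Cy)) D = 2 * finner (Cx * T₀ * Cy) D := by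
    rw [two_smul, finner_add_left]; ring
  -- the quadratic bound
  have ha0 : 0 ≤ a := norm_nonneg _
  have hb0 : 0 ≤ b := norm_nonneg _
  have e1 : (a • (1 : Matrix (Fin n) (Fin n) ℝ)) * D * (b • (1 : Matrix (Fin m) (Fin m) ℝ))
      - Cx * D * Cy
      = (a • (1 : Matrix (Fin n) (Fin n) ℝ)) * D * ((b • (1 : Matrix (Fin m) (Fin m) ℝ)) - Cy)
        + ((a • (1 : Matrix (Fin n) (Fin n) ℝ)) - Cx) * D * Cy := by
    have : ∀ (E : Matrix (Fin n) (Fin m) ℝ),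
        (a • (1 : Matrix (Fin n) (Fin n) ℝ)) * E * (b • (1 : Matrix (Fin m) (Fin m) ℝ))
        - Cx * E * Cy
        = (a • (1 : Matrix (Fin n) (Fin n) ℝ)) * E * ((b • (1 : Matrix (Fin m) (Fin m) ℝ)) - Cy)
          + ((a • (1 : Matrix (Fin n) (Fin n) ℝ)) - Cx) * E * Cy := by
      intro E
      rw [Matrix.mul_sub, Matrix.sub_mul, Matrix.sub_mul]
      abel
    exact this D
  have hfin : finner ((a • (1 : Matrix (Fin n) (Fin n) ℝ)) * D
      * (b • (1 : Matrix (Fin m) (Fin m) ℝ))) D = a * b * finner D D := by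
    rw [show (a • (1 : Matrix (Fin n) (Fin n) ℝ)) * D * (b • (1 : Matrix (Fin m) (Fin m) ℝ))
        = (a * b) • D by
      simp [smul_mul_assoc, mul_smul_comm, smul_smul, mul_comm]]
    exact finner_smul_left _ _ _
  have key1 : 0 ≤ finner ((a • (1 : Matrix (Fin n) (Fin n) ℝ)) * D
      * ((b • (1 : Matrix (Fin m) (Fin m) ℝ)) - Cy)) D :=
    key_nonneg (psd_smul_one ha0) (psd_opNorm_smul_sub hCy.isHermitian) D
  have key2 : 0 ≤ finner (((a • (1 : Matrix (Fin n) (Fin n) ℝ)) - Cx) * D * Cy) D :=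
    key_nonneg (psd_opNorm_smul_sub hCx.isHermitian) hCy D
  have hquad : finner (Cx * D * Cy) D ≤ a * b * finner D D := by
    have := finner_sub_left ((a • (1 : Matrix (Fin n) (Fin n) ℝ)) * D
      * (b • (1 : Matrix (Fin m) (Fin m) ℝ))) (Cx * D * Cy) D
    rw [e1, finner_add_left, hfin] at this
    linarith
  have hfrob : frobNorm D ^ 2 = finner D D := Real.sq_sqrt (finner_self_nonneg D)
  rw [hexp, hsmul2, hfrob]
  linarith
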